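/- Let V be a symplectic vector space of even dimension n over a finite field k with q elements. Then the number of non-isotropic planes in V equals q^{n−2}(q^n − 1)/(q^2 − 1). -/

import Mathlib

open Module

section Aux

variable {k W : Type*} [Field k] [Fintype k] [AddCommGroup W] [Module k W]

lemma aux_surj [FiniteDimensional k W] (f : W →ₗ[k] k) (hf : f ≠ 0) :
    Function.Surjective f := by
  obtain ⟨w, hw⟩ : ∃ w, f w ≠ 0 := by
    by_contra h
    push_neg at h
    exact hf (LinearMap.ext fun w => by simp [h w])
  intro c
  exact ⟨(c / f w) • w, by rw [map_smul, smul_eq_mul]; field_simp⟩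

lemma aux_fiber_card [FiniteDimensional k W] (f : W →ₗ[k] k) (hf : f ≠ 0) (c : k) :
    Nat.card {w : W // f w = c} = Fintype.card k ^ (finrank k W - 1) := by
  obtain ⟨w0, hw0⟩ := aux_surj f hf c
  have e : {w : W // f w = c} ≃ LinearMap.ker f :=
    { toFun := fun w => ⟨w.1 - w0, by simp [LinearMap.mem_ker, w.2, hw0]⟩
      invFun := fun w => ⟨w.1 + w0, by
        have h := w.2
        rw [LinearMap.mem_ker] at h
        simp [h, hw0]⟩
      left_inv := fun w => by simp
      right_inv := fun w => by simp }
  have hfin : Finite W := Module.finite_of_finite k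
  have : Fintype (LinearMap.ker f) := Fintype.ofFinite _
  rw [Nat.card_congr e, Nat.card_eq_fintype_card, card_eq_pow_finrank (K := k)]
  congr 1
  have h2 := LinearMap.finrank_range_add_finrank_ker f
  have h3 : finrank k (LinearMap.range f) = 1 := by
    rw [LinearMap.range_eq_top.mpr (aux_surj f hf), finrank_top, finrank_self]
  omega

/-- Counting pairs with `ω x y = 1` in a nondegenerate space. -/
lemma aux_pairs_card [FiniteDimensional k W] (ω : W →ₗ[k] W →ₗ[k] k)
    (hnd : ∀ v : W, (∀ w : W, ω v w = 0) → v = 0) :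
    Nat.card {p : W × W // ω p.1 p.2 = 1} =
      (Fintype.card k ^ finrank k W - 1) * Fintype.card k ^ (finrank k W - 1) := by
  classical
  have hfin : Finite W := Module.finite_of_finite k
  have : Fintype W := Fintype.ofFinite _
  have e : {p : W × W // ω p.1 p.2 = 1} ≃ Σ u : W, {v : W // ω u v = 1} :=
    { toFun := fun p => ⟨p.1.1, p.1.2, p.2⟩
      invFun := fun s => ⟨(s.1, s.2.1), s.2.2⟩
      left_inv := fun p => rfl
      right_inv := fun s => rfl }
  rw [Nat.card_congr e, Nat.card_eq_fintype_card, Fintype.card_sigma]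
  have key : ∀ u : W, Fintype.card {v : W // ω u v = 1} =
      if u = 0 then 0 else Fintype.card k ^ (finrank k W - 1) := by
    intro u
    by_cases hu : u = 0
    · rw [if_pos hu, Fintype.card_eq_zero_iff]
      exact ⟨fun v => by have := v.2; simp [hu] at this⟩
    · rw [if_neg hu, ← Nat.card_eq_fintype_card]
      apply aux_fiber_card (ω u) _ 1
      intro h
      exact hu (hnd u fun w => by simp [h])
  rw [Finset.sum_congr rfl (fun u _ => key u),
    Finset.sum_eq_sum_sdiff_singleton_add (Finset.mem_univ (0 : W))]
  rw [if_pos rfl, add_zero]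
  have heach : ∀ u ∈ Finset.univ \ {(0 : W)},
      (if u = 0 then 0 else Fintype.card k ^ (finrank k W - 1)) =
        Fintype.card k ^ (finrank k W - 1) := by
    intro u hu
    rw [if_neg (by simpa using (Finset.mem_sdiff.mp hu).2)]
  rw [Finset.sum_congr rfl heach, Finset.sum_const, smul_eq_mul,
    Finset.card_sdiff_of_subset (by simp), Finset.card_univ, Finset.card_singleton,
    Module.card_eq_pow_finrank (K := k)]

variable (ω : W →ₗ[k] W →ₗ[k] k)

lemma aux_skew (halt : ∀ v : W, ω v v = 0) (x y : W) : ω y x = - ω x y := by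
  have h := halt (x + y)
  simp only [map_add, LinearMap.add_apply, halt x, halt y] at h
  linear_combination h

lemma aux_li (halt : ∀ v : W, ω v v = 0) {u v : W} (huv : ω u v ≠ 0) : LinearIndependent k ![u, v] := by
  rw [LinearIndependent.pair_iff]
  intro s t hst
  have h1 : ω (s • u + t • v) v = 0 := by rw [hst]; simp
  have h2 : ω u (s • u + t • v) = 0 := by rw [hst]; simp
  simp only [map_add, map_smul, LinearMap.add_apply, LinearMap.smul_apply,
    smul_eq_mul, halt u, halt v, mul_zero, add_zero, zero_add] at h1 h2
  constructor
  · rcases mul_eq_zero.mp h1 with h | h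
    · exact h
    · exact absurd h huv
  · rcases mul_eq_zero.mp h2 with h | h
    · exact h
    · exact absurd h huv

lemma aux_finrank_span (halt : ∀ v : W, ω v v = 0) {u v : W} (huv : ω u v ≠ 0) :
    finrank k (Submodule.span k {u, v}) = 2 := by
  have h := finrank_span_eq_card (aux_li ω halt huv)
  have hr : Set.range ![u, v] = {u, v} := by
    simp [Matrix.range_cons, Matrix.range_empty, Set.singleton_union]
    exact Set.pair_comm v u
  rw [hr] at h
  simp at h
  exact h

lemma aux_span (halt : ∀ v : W, ω v v = 0) (P : Submodule k W) (hP2 : finrank k P = 2) {u v : W}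
    (hu : u ∈ P) (hv : v ∈ P) (huv : ω u v ≠ 0) :
    Submodule.span k {u, v} = P := by
  have h1 : Submodule.span k {u, v} ≤ P := by
    rw [Submodule.span_le]
    intro z hz
    rcases hz with h | h
    · exact h ▸ hu
    · exact (Set.mem_singleton_iff.mp h) ▸ hv
  have : FiniteDimensional k P := by
    apply FiniteDimensional.of_finrank_pos; omega
  exact Submodule.eq_of_le_of_finrank_le h1
    (by rw [hP2, aux_finrank_span ω halt huv])

lemma aux_plane_nd (halt : ∀ v : W, ω v v = 0) (P : Submodule k W) (hP2 : finrank k P = 2) {x y : W}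
    (hx : x ∈ P) (hy : y ∈ P) (hxy : ω x y ≠ 0) :
    ∀ u : W, u ∈ P → u ≠ 0 → ∃ w ∈ P, ω u w ≠ 0 := by
  intro u huP hu0
  have hsp := aux_span ω halt P hP2 hx hy hxy
  rw [← hsp] at huP
  obtain ⟨a, b, hab⟩ := Submodule.mem_span_pair.mp huP
  by_contra h
  push_neg at h
  have h1 := h x hx
  have h2 := h y hy
  rw [← hab] at h1 h2
  simp only [map_add, map_smul, LinearMap.add_apply, LinearMap.smul_apply,
    smul_eq_mul, halt x, halt y, aux_skew ω halt x y, mul_zero, add_zero,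
    zero_add] at h1 h2
  have ha : a = 0 := by
    rcases mul_eq_zero.mp h2 with h | h
    · exact h
    · exact absurd h hxy
  have hb : b = 0 := by
    have hb' : b * ω x y = 0 := by linear_combination -h1
    rcases mul_eq_zero.mp hb' with h | h
    · exact h
    · exact absurd h hxy
  exact hu0 (by rw [← hab, ha, hb]; simp)

lemma aux_plane_pairs [FiniteDimensional k W] (halt : ∀ v : W, ω v v = 0) (P : Submodule k W)
    (hP2 : finrank k P = 2) {x y : W}
    (hx : x ∈ P) (hy : y ∈ P) (hxy : ω x y ≠ 0) :
    Nat.card {p : ↥P × ↥P // ω p.1.1 p.2.1 = 1} =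
      (Fintype.card k ^ 2 - 1) * Fintype.card k := by
  have hnd : ∀ v : ↥P, (∀ w : ↥P, (ω.domRestrict₁₂ P P) v w = 0) → v = 0 := by
    intro v hv
    by_contra hv0
    obtain ⟨w, hwP, hw⟩ := aux_plane_nd ω halt P hP2 hx hy hxy v.1 v.2
      (fun h => hv0 (Subtype.ext h))
    exact hw (hv ⟨w, hwP⟩)
  have h := aux_pairs_card (ω.domRestrict₁₂ P P) hnd
  rw [hP2] at h
  have : {p : ↥P × ↥P // ω p.1.1 p.2.1 = 1} =
      {p : ↥P × ↥P // (ω.domRestrict₁₂ P P) p.1 p.2 = 1} := rfl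
  rw [this, h]
  norm_num

end Aux

/-- The number of non-isotropic planes in an n-dimensional symplectic vector
space over a field with q elements is q^{n−2}(q^n − 1)/(q² − 1). -/
theorem stmt5 (k V : Type*) [Field k] [Fintype k] [AddCommGroup V] [Module k V]
    [FiniteDimensional k V]
    (ω : V →ₗ[k] V →ₗ[k] k)
    (halt : ∀ v : V, ω v v = 0)
    (hnd : ∀ v : V, (∀ w : V, ω v w = 0) → v = 0)
    (q n : ℕ)
    (hq : Fintype.card k = q) (hn : Module.finrank k V = n)
    (heven : Even n) (hn2 : 2 ≤ n) :
    Nat.card {P : Submodule k V // Module.finrank k ↥P = 2 ∧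
        ∃ x ∈ P, ∃ y ∈ P, ω x y ≠ 0} =
      q ^ (n - 2) * (q ^ n - 1) / (q ^ 2 - 1) := by
  classical
  subst hq hn
  set q := Fintype.card k with hq
  set n := finrank k V with hn
  have hfinV : Finite V := Module.finite_of_finite k
  have : Fintype V := Fintype.ofFinite _
  have hfinS : Finite (Submodule k V) :=
    Finite.of_injective _ SetLike.coe_injective
  have : Fintype (Submodule k V) := Fintype.ofFinite _
  set Planes := {P : Submodule k V // Module.finrank k ↥P = 2 ∧
      ∃ x ∈ P, ∃ y ∈ P, ω x y ≠ 0} with hPl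
  -- the grouping equivalence
  have E : {p : V × V // ω p.1 p.2 = 1} ≃
      Σ P : Planes, {p : ↥P.1 × ↥P.1 // ω p.1.1 p.2.1 = 1} :=
    { toFun := fun p =>
        ⟨⟨Submodule.span k {p.1.1, p.1.2},
          ⟨aux_finrank_span ω halt (by rw [p.2]; exact one_ne_zero),
            ⟨p.1.1, Submodule.subset_span (by simp),
             p.1.2, Submodule.subset_span (by simp),
             by rw [p.2]; exact one_ne_zero⟩⟩⟩,
          ⟨(⟨p.1.1, Submodule.subset_span (by simp)⟩,
            ⟨p.1.2, Submodule.subset_span (by simp)⟩), p.2⟩⟩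
      invFun := fun s => ⟨(s.2.1.1.1, s.2.1.2.1), s.2.2⟩
      left_inv := fun p => rfl
      right_inv := by
        rintro ⟨⟨P, hP⟩, ⟨⟨⟨u, hu⟩, ⟨v, hv⟩⟩, h⟩⟩
        have hsp : Submodule.span k {u, v} = P :=
          aux_span ω halt P hP.1 hu hv (by rw [h]; exact one_ne_zero)
        subst hsp
        rfl }
  have hcard1 := aux_pairs_card ω hnd
  rw [Nat.card_congr E] at hcard1
  have : Fintype Planes := Fintype.ofFinite _
  rw [Nat.card_eq_fintype_card, Fintype.card_sigma] at hcard1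
  have heq : ∀ P : Planes, Fintype.card {p : ↥P.1 × ↥P.1 // ω p.1.1 p.2.1 = 1} =
      (q ^ 2 - 1) * q := by
    rintro ⟨P, hP2, x, hx, y, hy, hxy⟩
    rw [← Nat.card_eq_fintype_card]
    exact aux_plane_pairs ω halt P hP2 hx hy hxy
  rw [Finset.sum_congr rfl (fun P _ => heq P), Finset.sum_const, smul_eq_mul,
    Finset.card_univ, ← Nat.card_eq_fintype_card] at hcard1
  -- arithmetic
  have hq2 : 2 ≤ q := Fintype.one_lt_card
  have hqpos : 0 < q := by omega
  have hq21 : 0 < q ^ 2 - 1 := by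
    have h4 : 4 ≤ q ^ 2 := by nlinarith
    omega
  set N := Nat.card Planes with hN
  have key : N * (q ^ 2 - 1) = q ^ (n - 2) * (q ^ n - 1) := by
    apply Nat.eq_of_mul_eq_mul_right hqpos
    calc N * (q ^ 2 - 1) * q = N * ((q ^ 2 - 1) * q) := by ring
      _ = (q ^ n - 1) * q ^ (n - 1) := hcard1
      _ = q ^ (n - 2) * (q ^ n - 1) * q := by
          rw [show n - 1 = n - 2 + 1 from by omega, pow_succ]; ring
  rw [← key, Nat.mul_div_cancel _ hq21]
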